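/- In the polynomial ring ℚ[x,y], for every n ≥ 1 one has the partial polarization identity x·y^n = (1/(n+1)) ∑_{j=0}^{n} (1/n!) C(n,j) (−1)^{n−j} (x + j·y)^{n+1} − (n/2)·y^{n+1}. -/

import Mathlib

open Finset

/-- `T n k = ∑_{j=0}^n (-1)^j C(n,j) j^k` in `ℚ`. -/
def Tsum (n k : ℕ) : ℚ := ∑ j ∈ range (n + 1), (-1 : ℚ) ^ j * (n.choose j : ℚ) * (j : ℚ) ^ k

lemma Tsum_zero (k : ℕ) : Tsum 0 k = (0 : ℚ) ^ k := by simp [Tsum]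

lemma aux2 (n k : ℕ) :
    ∑ i ∈ range (n + 1), (-1 : ℚ) ^ i * (n.choose i : ℚ) * ((i : ℚ) + 1) ^ k
      = ∑ m ∈ range (k + 1), (k.choose m : ℚ) * Tsum n m := by
  have h : ∀ i : ℕ, ((i : ℚ) + 1) ^ k = ∑ m ∈ range (k + 1), (i : ℚ) ^ m * (k.choose m : ℚ) := by
    intro i
    simpa using add_pow (i : ℚ) 1 k
  calc ∑ i ∈ range (n + 1), (-1 : ℚ) ^ i * (n.choose i : ℚ) * ((i : ℚ) + 1) ^ k
      = ∑ i ∈ range (n + 1), ∑ m ∈ range (k + 1),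
          (k.choose m : ℚ) * ((-1 : ℚ) ^ i * (n.choose i : ℚ) * (i : ℚ) ^ m) := by
        refine Finset.sum_congr rfl fun i _ => ?_
        rw [h i, Finset.mul_sum]
        exact Finset.sum_congr rfl fun m _ => by ring
    _ = ∑ m ∈ range (k + 1), (k.choose m : ℚ) * Tsum n m := by
        rw [Finset.sum_comm]
        exact Finset.sum_congr rfl fun m _ => by rw [Tsum, Finset.mul_sum]

lemma aux1 (n k : ℕ) :
    ∑ i ∈ range (n + 1), (-1 : ℚ) ^ i * (n.choose (i + 1) : ℚ) * ((i : ℚ) + 1) ^ k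
      = (0 : ℚ) ^ k - Tsum n k := by
  have h := Finset.sum_range_succ' (fun j => (-1 : ℚ) ^ j * (n.choose j : ℚ) * (j : ℚ) ^ k) n
  -- h : Tsum n k = ∑ i ∈ range n, f (i+1) + f 0
  have htop : ∑ i ∈ range (n + 1), (-1 : ℚ) ^ i * (n.choose (i + 1) : ℚ) * ((i : ℚ) + 1) ^ k
      = ∑ i ∈ range n, (-1 : ℚ) ^ i * (n.choose (i + 1) : ℚ) * ((i : ℚ) + 1) ^ k := by
    rw [Finset.sum_range_succ, Nat.choose_succ_self]
    simp
  rw [htop]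
  have : Tsum n k = ∑ i ∈ range n, (-1:ℚ)^(i+1) * (n.choose (i+1) : ℚ) * ((i:ℚ)+1) ^ k + (0:ℚ)^k := by
    rw [Tsum, h]
    push_cast
    simp
  rw [this]
  have : ∑ i ∈ range n, (-1:ℚ)^(i+1) * (n.choose (i+1) : ℚ) * ((i:ℚ)+1) ^ k
      = -∑ i ∈ range n, (-1:ℚ)^i * (n.choose (i+1) : ℚ) * ((i:ℚ)+1) ^ k := by
    rw [← Finset.sum_neg_distrib]
    exact Finset.sum_congr rfl fun i _ => by ring
  rw [this]; ring

lemma Tsum_succ (n k : ℕ) :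
    Tsum (n + 1) k = -∑ m ∈ range k, (k.choose m : ℚ) * Tsum n m := by
  have h := Finset.sum_range_succ' (fun j => (-1 : ℚ) ^ j * ((n+1).choose j : ℚ) * (j : ℚ) ^ k) (n + 1)
  have e1 : Tsum (n+1) k
      = ∑ i ∈ range (n+1), (-1:ℚ)^(i+1) * (((n+1).choose (i+1)) : ℚ) * ((i:ℚ)+1)^k + (0:ℚ)^k := by
    rw [Tsum, h]; push_cast; simp
  have e2 : ∀ i : ℕ, (((n+1).choose (i+1)) : ℚ) = (n.choose i : ℚ) + (n.choose (i+1) : ℚ) := by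
    intro i; rw [Nat.choose_succ_succ]; push_cast; ring
  have e3 : Tsum (n+1) k
      = -∑ i ∈ range (n+1), (-1:ℚ)^i * (n.choose i : ℚ) * ((i:ℚ)+1)^k
        - ∑ i ∈ range (n+1), (-1:ℚ)^i * (n.choose (i+1) : ℚ) * ((i:ℚ)+1)^k + (0:ℚ)^k := by
    rw [e1, ← Finset.sum_neg_distrib, ← Finset.sum_sub_distrib]
    congr 1
    refine Finset.sum_congr rfl fun i _ => ?_
    rw [e2 i]; ring
  rw [e3, aux1, aux2, Finset.sum_range_succ]
  simp
  ring

lemma Tsum_lt {n k : ℕ} (h : k < n) : Tsum n k = 0 := by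
  induction n generalizing k with
  | zero => omega
  | succ n ih =>
    rw [Tsum_succ]
    rw [Finset.sum_eq_zero fun m hm => ?_, neg_zero]
    rw [ih (by simp at hm; omega), mul_zero]

lemma Tsum_diag (n : ℕ) : Tsum n n = (-1 : ℚ) ^ n * (n.factorial : ℚ) := by
  induction n with
  | zero => simp [Tsum]
  | succ n ih =>
    rw [Tsum_succ, Finset.sum_range_succ, Finset.sum_eq_zero fun m hm => by
      rw [Tsum_lt (by simp at hm; omega), mul_zero], zero_add, ih,
      Nat.choose_succ_self_right]
    push_cast [Nat.factorial_succ]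
    ring

lemma Tsum_succ_diag (n : ℕ) :
    Tsum n (n + 1) = (-1 : ℚ) ^ n * (n.factorial : ℚ) * n * (n + 1) / 2 := by
  induction n with
  | zero => simp [Tsum]
  | succ n ih =>
    rw [Tsum_succ, Finset.sum_range_succ, Finset.sum_range_succ,
      Finset.sum_eq_zero fun m hm => by rw [Tsum_lt (by simp at hm; omega), mul_zero], zero_add,
      ih, Tsum_diag]
    have h1 : ((n + 2).choose n : ℚ) = (n + 2) * (n + 1) / 2 := by
      have : (n + 2).choose n = (n + 2).choose 2 := by
        have h := Nat.choose_symm (n := n + 2) (k := 2) (by omega)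
        simpa using h
      rw [this, Nat.cast_choose_two]
      push_cast; ring
    have h2 : ((n + 2).choose (n + 1) : ℚ) = (n + 2) := by
      rw [Nat.choose_succ_self_right]; push_cast; ring
    rw [h1, h2]
    push_cast [Nat.factorial_succ]
    ring

open MvPolynomial Finset

private lemma hsq (m : ℕ) : (-1 : ℚ) ^ m * (-1 : ℚ) ^ m = 1 := by
  rw [← pow_add, ← two_mul, pow_mul]; norm_num

private lemma hsign {n j : ℕ} (hj : j ≤ n) : (-1 : ℚ) ^ (n - j) = (-1) ^ n * (-1) ^ j := by
  have h1 : (-1 : ℚ) ^ (n - j) * (-1) ^ j = (-1) ^ n := by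
    rw [← pow_add, Nat.sub_add_cancel hj]
  calc (-1 : ℚ) ^ (n - j) = (-1 : ℚ) ^ (n - j) * ((-1) ^ j * (-1) ^ j) := by rw [hsq]; ring
    _ = ((-1 : ℚ) ^ (n - j) * (-1) ^ j) * (-1) ^ j := by ring
    _ = (-1) ^ n * (-1) ^ j := by rw [h1]

/-- In `ℚ[x,y]`, for every `n ≥ 1`,
`x·y^n = (1/(n+1)) ∑_{j=0}^{n} (1/n!) C(n,j) (−1)^{n−j} (x + j·y)^{n+1} − (n/2)·y^{n+1}`. -/
theorem stmt_7 (n : ℕ) (hn : 1 ≤ n) :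
    (X 0 * X 1 ^ n : MvPolynomial (Fin 2) ℚ)
      = C (1 / ((n : ℚ) + 1)) *
          ∑ j ∈ Finset.range (n + 1),
            C ((1 / (n.factorial : ℚ)) * (n.choose j : ℚ) * (-1 : ℚ) ^ (n - j)) *
              (X 0 + C (j : ℚ) * X 1) ^ (n + 1)
        - C ((n : ℚ) / 2) * X 1 ^ (n + 1) := by
  have hfac : (n.factorial : ℚ) ≠ 0 := Nat.cast_ne_zero.mpr n.factorial_ne_zero
  have hn1 : ((n : ℚ) + 1) ≠ 0 := by positivity
  have hb : ∀ m : ℕ, ∑ j ∈ Finset.range (n + 1),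
      ((1 / (n.factorial : ℚ)) * (n.choose j : ℚ) * (-1 : ℚ) ^ (n - j)) * (j : ℚ) ^ m
        = (1 / (n.factorial : ℚ)) * (-1) ^ n * Tsum n m := by
    intro m
    rw [Tsum, Finset.mul_sum]
    refine Finset.sum_congr rfl fun j hj => ?_
    rw [hsign (by simp at hj; omega)]
    ring
  have expand : ∀ j : ℕ, (X 0 + C (j : ℚ) * X 1 : MvPolynomial (Fin 2) ℚ) ^ (n + 1)
      = ∑ k ∈ Finset.range (n + 2),
          C ((j : ℚ) ^ (n + 1 - k) * (((n + 1).choose k : ℕ) : ℚ)) *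
            (X 0 ^ k * X 1 ^ (n + 1 - k)) := by
    intro j
    rw [add_pow]
    refine Finset.sum_congr rfl fun k _ => ?_
    rw [mul_pow, ← C_pow, ← map_natCast (C : ℚ →+* MvPolynomial (Fin 2) ℚ) ((n + 1).choose k),
      C_mul]
    ring
  have key : (∑ j ∈ Finset.range (n + 1),
        C ((1 / (n.factorial : ℚ)) * (n.choose j : ℚ) * (-1 : ℚ) ^ (n - j)) *
          (X 0 + C (j : ℚ) * X 1) ^ (n + 1) : MvPolynomial (Fin 2) ℚ)
      = C ((n : ℚ) * ((n : ℚ) + 1) / 2) * X 1 ^ (n + 1) + C ((n : ℚ) + 1) * (X 0 * X 1 ^ n) := by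
    calc (∑ j ∈ Finset.range (n + 1),
        C ((1 / (n.factorial : ℚ)) * (n.choose j : ℚ) * (-1 : ℚ) ^ (n - j)) *
          (X 0 + C (j : ℚ) * X 1) ^ (n + 1) : MvPolynomial (Fin 2) ℚ)
        = ∑ j ∈ Finset.range (n + 1), ∑ k ∈ Finset.range (n + 2),
            C (((1 / (n.factorial : ℚ)) * (n.choose j : ℚ) * (-1 : ℚ) ^ (n - j)) *
                ((j : ℚ) ^ (n + 1 - k) * (((n + 1).choose k : ℕ) : ℚ))) *
              (X 0 ^ k * X 1 ^ (n + 1 - k)) := by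
          refine Finset.sum_congr rfl fun j _ => ?_
          rw [expand j, Finset.mul_sum]
          refine Finset.sum_congr rfl fun k _ => ?_
          simp only [C_mul]; ring
      _ = ∑ k ∈ Finset.range (n + 2),
            C ((1 / (n.factorial : ℚ)) * (-1) ^ n * Tsum n (n + 1 - k) *
                (((n + 1).choose k : ℕ) : ℚ)) *
              (X 0 ^ k * X 1 ^ (n + 1 - k)) := by
          rw [Finset.sum_comm]
          refine Finset.sum_congr rfl fun k _ => ?_
          rw [← Finset.sum_mul, ← map_sum]
          congr 2
          have h3 : ∑ j ∈ Finset.range (n + 1),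
              ((1 / (n.factorial : ℚ)) * (n.choose j : ℚ) * (-1 : ℚ) ^ (n - j)) *
                ((j : ℚ) ^ (n + 1 - k) * (((n + 1).choose k : ℕ) : ℚ))
              = (∑ j ∈ Finset.range (n + 1),
                  ((1 / (n.factorial : ℚ)) * (n.choose j : ℚ) * (-1 : ℚ) ^ (n - j)) *
                    (j : ℚ) ^ (n + 1 - k)) * (((n + 1).choose k : ℕ) : ℚ) := by
            rw [Finset.sum_mul]
            exact Finset.sum_congr rfl fun j _ => by ring
          rw [h3, hb]
      _ = C ((n : ℚ) * ((n : ℚ) + 1) / 2) * X 1 ^ (n + 1) + C ((n : ℚ) + 1) * (X 0 * X 1 ^ n) := by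
          rw [Finset.sum_range_succ', Finset.sum_range_succ']
          have hz : ∑ i ∈ Finset.range n,
              C ((1 / (n.factorial : ℚ)) * (-1) ^ n * Tsum n (n + 1 - (i + 1 + 1)) *
                  (((n + 1).choose (i + 1 + 1) : ℕ) : ℚ)) *
                ((X 0 : MvPolynomial (Fin 2) ℚ) ^ (i + 1 + 1) * X 1 ^ (n + 1 - (i + 1 + 1))) = 0 := by
            refine Finset.sum_eq_zero fun i hi => ?_
            have hlt : n + 1 - (i + 1 + 1) < n := by simp at hi; omega
            rw [Tsum_lt hlt]
            simp
          rw [hz, zero_add]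
          have h1 : (1 / (n.factorial : ℚ)) * (-1) ^ n * Tsum n (n + 1 - (0 + 1)) *
              (((n + 1).choose (0 + 1) : ℕ) : ℚ) = (n : ℚ) + 1 := by
            simp only [Nat.add_sub_cancel, Nat.choose_one_right, zero_add]
            rw [Tsum_diag]
            push_cast
            field_simp
            linear_combination hsq n
          have h2 : (1 / (n.factorial : ℚ)) * (-1) ^ n * Tsum n (n + 1 - 0) *
              (((n + 1).choose 0 : ℕ) : ℚ) = (n : ℚ) * ((n : ℚ) + 1) / 2 := by
            simp only [Nat.sub_zero, Nat.choose_zero_right, Nat.cast_one, mul_one]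
            rw [Tsum_succ_diag]
            field_simp
            linear_combination hsq n
          rw [h1, h2]
          have he : n + 1 - (0 + 1) = n := by omega
          rw [he]
          simp only [pow_one, Nat.sub_zero, pow_zero, one_mul, zero_add]
          ring
  rw [key, mul_add, ← mul_assoc, ← mul_assoc, ← C_mul, ← C_mul]
  have e1 : 1 / ((n : ℚ) + 1) * ((n : ℚ) * ((n : ℚ) + 1) / 2) = (n : ℚ) / 2 := by
    field_simp
  have e2 : 1 / ((n : ℚ) + 1) * ((n : ℚ) + 1) = 1 := by
    field_simp
  rw [e1, e2, C_1]
  ring
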